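/- arXiv:1606.04059 — 2 statements merged into one kernel-verified Lean document; each statement's English description precedes it below -/
import Mathlib

section
/- Let L₁ = {(a²b)^{2k} : k ≥ 0} ∪ {(ab²)^{2k} : k ≥ 0} over the alphabet {a, b}. For every nonempty word w over {a, b}: w is syntactically equivalent to a²·b·a with respect to L₁ if and only if w = (a²·b)^{2k}·a²·b·a for some natural number k. -/
/-- The two-letter alphabet `{a, b}`. -/
inductive AB : Type
  | a : AB
  | b : AB

/-- Words over `{a, b}`, as elements of the free monoid (the empty word is `1`). -/
abbrev Word : Type := FreeMonoid AB

/-- The letter `a` as a word. -/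
def wa : Word := FreeMonoid.of AB.a

/-- The letter `b` as a word. -/
def wb : Word := FreeMonoid.of AB.b

/-- Syntactic equivalence of `u` and `v` with respect to the language `L`:
for all (possibly empty) words `p, q`, `p·u·q ∈ L ↔ p·v·q ∈ L`. -/
def SynEq (L : Set Word) (u v : Word) : Prop :=
  ∀ p q : Word, p * u * q ∈ L ↔ p * v * q ∈ L

/-- The language `L₁ = ((a²b)²)* ∪ ((ab²)²)* = {(a²b)^(2k) : k ≥ 0} ∪ {(ab²)^(2k) : k ≥ 0}`. -/
def L1 : Set Word :=
  {w | ∃ k : ℕ, w = (wa ^ 2 * wb) ^ (2 * k)} ∪ {w | ∃ k : ℕ, w = (wa * wb ^ 2) ^ (2 * k)}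

open AB in
def blA : ℕ → List AB
  | 0 => []
  | n+1 => a :: a :: b :: blA n

open AB in
def blB : ℕ → List AB
  | 0 => []
  | n+1 => a :: b :: b :: blB n

lemma blA_add (m n : ℕ) : blA (m + n) = blA m ++ blA n := by
  induction m with
  | zero => simp [blA]
  | succ m ih => rw [Nat.succ_add]; simp [blA, ih]

lemma length_blA (n : ℕ) : (blA n).length = 3 * n := by
  induction n with
  | zero => simp [blA]
  | succ n ih => simp [blA, ih]; ring

lemma toList_powA (n : ℕ) : FreeMonoid.toList ((wa ^ 2 * wb) ^ n) = blA n := by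
  induction n with
  | zero => simp [blA]
  | succ n ih => rw [pow_succ', FreeMonoid.toList_mul, ih]; rfl

lemma toList_powB (n : ℕ) : FreeMonoid.toList ((wa * wb ^ 2) ^ n) = blB n := by
  induction n with
  | zero => simp [blB]
  | succ n ih => rw [pow_succ', FreeMonoid.toList_mul, ih]; rfl

lemma mem_L1_iff (w : Word) :
    w ∈ L1 ↔ (∃ m, FreeMonoid.toList w = blA (2 * m)) ∨ (∃ m, FreeMonoid.toList w = blB (2 * m)) := by
  constructor
  · rintro (⟨k, rfl⟩ | ⟨k, rfl⟩)
    · exact Or.inl ⟨k, toList_powA _⟩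
    · exact Or.inr ⟨k, toList_powB _⟩
  · rintro (⟨m, h⟩ | ⟨m, h⟩)
    · exact Or.inl ⟨m, FreeMonoid.toList.injective (by rw [h, toList_powA])⟩
    · exact Or.inr ⟨m, FreeMonoid.toList.injective (by rw [h, toList_powB])⟩

-- no word containing aa is in (abb)^n
lemma lemA : ∀ n (p s : List AB), p ++ (AB.a :: AB.a :: s) ≠ blB n := by
  intro n
  induction n with
  | zero => intro p s h; simp [blB] at h
  | succ n ih =>
    intro p s h
    match p with
    | [] => simp [blB] at h
    | [x] => simp [blB] at h
    | [x, y] => simp [blB] at h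
    | x :: y :: z :: p' =>
      simp [blB] at h
      exact ih p' s h.2.2.2

lemma lemB : ∀ n (p s : List AB), p ++ (AB.a :: AB.a :: s) = blA n → ∃ j, p = blA j := by
  intro n
  induction n with
  | zero => intro p s h; simp [blA] at h
  | succ n ih =>
    intro p s h
    match p with
    | [] => exact ⟨0, rfl⟩
    | [x] => simp [blA] at h
    | [x, y] => simp [blA] at h
    | x :: y :: z :: p' =>
      simp [blA] at h
      obtain ⟨j, hj⟩ := ih p' s h.2.2.2
      exact ⟨j + 1, by simp [blA, h.1, h.2.1, h.2.2.1, hj, Nat.add_comm]⟩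

lemma startsAA (n : ℕ) (q : List AB) :
    ∃ r, blA n ++ (AB.a :: AB.a :: AB.b :: AB.a :: q) = AB.a :: AB.a :: r := by
  cases n with
  | zero => exact ⟨AB.b :: AB.a :: q, rfl⟩
  | succ n => exact ⟨AB.b :: (blA n ++ (AB.a :: AB.a :: AB.b :: AB.a :: q)), rfl⟩

lemma splitA {j n : ℕ} {x : List AB} (h : blA j ++ x = blA n) :
    ∃ t, n = j + t ∧ x = blA t := by
  have hlen : 3 * j + x.length = 3 * n := by
    have := congrArg List.length h
    simpa [length_blA] using this
  have hj : j ≤ n := by omega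
  refine ⟨n - j, by omega, ?_⟩
  have : blA n = blA j ++ blA (n - j) := by
    rw [← blA_add]; congr 1; omega
  rw [this] at h
  exact List.append_cancel_left h

lemma sufB : ∀ m (l : List AB), l ++ [AB.a, AB.b] ≠ blB m := by
  intro m
  induction m with
  | zero => intro l h; simp [blB] at h
  | succ m ih =>
    intro l h
    match l with
    | [] => simp [blB] at h
    | [x] => simp [blB] at h
    | [x, y] => simp [blB] at h
    | x :: y :: z :: l' =>
      simp [blB] at h
      exact ih l' h.2.2.2

lemma sufA : ∀ m (l : List AB), l ++ [AB.a, AB.b] = blA (m + 1) → l = blA m ++ [AB.a] := by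
  intro m
  induction m with
  | zero =>
    intro l h
    match l with
    | [] => simp [blA] at h
    | [x] => simp [blA] at h; simp [blA, h]
    | [x, y] => simp [blA] at h
    | x :: y :: z :: l' => simp [blA] at h
  | succ m ih =>
    intro l h
    match l with
    | [] => simp [blA] at h
    | [x] =>
      exfalso
      cases m with
      | zero => simp [blA] at h
      | succ m => simp [blA] at h
    | [x, y] => simp [blA] at h
    | x :: y :: z :: l' =>
      simp [blA] at h
      have := ih l' h.2.2.2
      simp [blA, h.1, h.2.1, h.2.2.1, this]

lemma keyIff (k : ℕ) (P Q : List AB) :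
    (∃ m, P ++ blA (2 * k) ++ (AB.a :: AB.a :: AB.b :: AB.a :: Q) = blA (2 * m)) ↔
    (∃ m, P ++ (AB.a :: AB.a :: AB.b :: AB.a :: Q) = blA (2 * m)) := by
  constructor
  · rintro ⟨m, hm⟩
    obtain ⟨r, hr⟩ := startsAA (2 * k) Q
    have h' : P ++ (AB.a :: AB.a :: r) = blA (2 * m) := by
      rw [List.append_assoc, hr] at hm; exact hm
    obtain ⟨j, hj⟩ := lemB _ P _ h'
    rw [hj, ← blA_add] at hm
    obtain ⟨t, ht, hx⟩ := splitA hm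
    refine ⟨m - k, ?_⟩
    rw [hj, hx, ← blA_add]
    congr 1
    omega
  · rintro ⟨m, hm⟩
    obtain ⟨j, hj⟩ := lemB _ P _ hm
    rw [hj] at hm
    obtain ⟨t, ht, hx⟩ := splitA hm
    refine ⟨m + k, ?_⟩
    rw [hj, hx, List.append_assoc, ← blA_add, ← blA_add]
    congr 1
    omega

/-- a nonempty word `w` is syntactically equivalent to `a²·b·a` with
respect to `L₁` if and only if `w = (a²·b)^(2k)·a²·b·a` for some `k : ℕ`. -/
theorem synEq_a2ba_iff (w : Word) (hw : w ≠ 1) :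
    SynEq L1 w (wa ^ 2 * wb * wa) ↔
      ∃ k : ℕ, w = (wa ^ 2 * wb) ^ (2 * k) * (wa ^ 2 * wb * wa) := by
  constructor
  · intro h
    have hmem : (1 : Word) * (wa ^ 2 * wb * wa) * (wa * wb) ∈ L1 := by
      left
      exact ⟨1, FreeMonoid.toList.injective (by rw [toList_powA]; rfl)⟩
    have h1 := (h 1 (wa * wb)).mpr hmem
    rw [one_mul] at h1
    rcases (mem_L1_iff _).mp h1 with ⟨m, hm⟩ | ⟨m, hm⟩
    · have hm' : FreeMonoid.toList w ++ [AB.a, AB.b] = blA (2 * m) := by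
        simpa [wa, wb] using hm
      cases m with
      | zero => simp [blA] at hm'
      | succ m =>
        have h2m : 2 * (m + 1) = (2 * m + 1) + 1 := by omega
        rw [h2m] at hm'
        have hw' := sufA _ _ hm'
        refine ⟨m, FreeMonoid.toList.injective ?_⟩
        rw [hw']
        have : blA (2 * m + 1) = blA (2 * m) ++ blA 1 := blA_add _ _
        rw [this, List.append_assoc]
        simp only [FreeMonoid.toList_mul, toList_powA]
        congr 1
    · exfalso
      have hm' : FreeMonoid.toList w ++ [AB.a, AB.b] = blB (2 * m) := by
        simpa [wa, wb] using hm
      exact sufB _ _ hm'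
  · rintro ⟨k, rfl⟩ p q
    rw [mem_L1_iff, mem_L1_iff]
    have e1 : FreeMonoid.toList (p * ((wa ^ 2 * wb) ^ (2 * k) * (wa ^ 2 * wb * wa)) * q)
        = FreeMonoid.toList p ++ blA (2 * k)
            ++ (AB.a :: AB.a :: AB.b :: AB.a :: FreeMonoid.toList q) := by
      simp only [FreeMonoid.toList_mul, toList_powA]
      simp [wa, wb, pow_two, List.append_assoc]
    have e2 : FreeMonoid.toList (p * (wa ^ 2 * wb * wa) * q)
        = FreeMonoid.toList p ++ (AB.a :: AB.a :: AB.b :: AB.a :: FreeMonoid.toList q) := by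
      simp [wa, wb, pow_two, FreeMonoid.toList_mul, List.append_assoc]
    rw [e1, e2]
    constructor
    · rintro (hA | ⟨m, hm⟩)
      · exact Or.inl ((keyIff k _ _).mp hA)
      · exfalso
        obtain ⟨r, hr⟩ := startsAA (2 * k) (FreeMonoid.toList q)
        rw [List.append_assoc, hr] at hm
        exact lemA _ _ _ hm
    · rintro (hA | ⟨m, hm⟩)
      · exact Or.inl ((keyIff k _ _).mpr hA)
      · exact absurd hm (lemA _ _ _)
end

section
/- Let S be a finite semigroup in which every element s satisfies s^{k+1} = s for some integer k ≥ 1 (i.e., S is completely regular). Then for all p, q ∈ S and all integers m ≥ 1 and n ≥ 1 such that (p²q)ᵐ is idempotent and (pq²)ⁿ is idempotent, one has (p²·q)^{2m−1} · (p·q²)ⁿ · (p²·q)² = p²·q. -/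
/-- The `n`-th power `sⁿ` of an element `s` of a semigroup, for `n ≥ 1`
(by convention `spow s 0 = s`, but this junk value is never used below). -/
def spow {S : Type*} [Semigroup S] (s : S) : ℕ → S
  | 0 => s
  | 1 => s
  | n + 2 => spow s (n + 1) * s

section MonoidLemmas
variable {M : Type*} [Monoid M]

private lemma shiftpow (u v : M) : ∀ j : ℕ, u * (v * u) ^ j = (u * v) ^ j * u
  | 0 => by simp
  | j + 1 => by
    calc u * (v * u) ^ (j + 1) = u * v * (u * (v * u) ^ j) := by
          rw [pow_succ']; simp only [← mul_assoc]
    _ = u * v * ((u * v) ^ j * u) := by rw [shiftpow u v j]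
    _ = (u * v) ^ (j + 1) * u := by rw [← mul_assoc, ← pow_succ']

private lemma period_pow (s : M) (k : ℕ) (h : s ^ (k + 1) = s) : ∀ t : ℕ, s ^ (k * t + 1) = s
  | 0 => by simp
  | t + 1 => by
    have e : k * (t + 1) + 1 = (k * t + 1) + k := by ring
    rw [e, pow_add, period_pow s k h t, ← pow_succ', h]

private lemma lift_period (s : M) (k K : ℕ) (h : s ^ (k + 1) = s) (hdvd : k ∣ K) :
    s ^ (K + 1) = s := by
  obtain ⟨t, rfl⟩ := hdvd
  exact period_pow s k h t

private lemma idem_pow (t : M) (h : t * t = t) : ∀ j : ℕ, t ^ (j + 1) = t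
  | 0 => by simp
  | j + 1 => by rw [pow_succ, idem_pow t h j, h]

private lemma idem_power_unique (s : M) (m K : ℕ) (hm : 1 ≤ m) (hK : 1 ≤ K)
    (hs : s ^ (K + 1) = s) (hid : s ^ m * s ^ m = s ^ m) : s ^ m = s ^ K := by
  obtain ⟨l, rfl⟩ : ∃ l, m = l + 1 := ⟨m - 1, by omega⟩
  have hKid : s ^ K * s ^ K = s ^ K := by
    obtain ⟨L, rfl⟩ : ∃ L, K = L + 1 := ⟨K - 1, by omega⟩
    rw [← pow_add]
    have e : L + 1 + (L + 1) = L + (L + 1 + 1) := by ring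
    rw [e, pow_add, hs, ← pow_succ]
  calc s ^ (l + 1) = (s ^ (l + 1)) ^ K := by
        obtain ⟨L, rfl⟩ : ∃ L, K = L + 1 := ⟨K - 1, by omega⟩
        rw [idem_pow _ hid L]
    _ = (s ^ K) ^ (l + 1) := by rw [← pow_mul, mul_comm, pow_mul]
    _ = s ^ K := idem_pow _ hKid l

/-- Core computation: `a^K · (b^K · a) = a` for `a = xc`, `b = cy`,
under the listed relations. -/
private lemma core (x y a b c : M) (K L : ℕ) (hKL : K = L + 1)
    (hxc : a = x * c) (hcy : b = c * y)
    (h3 : y * c ^ K * x = y * x)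
    (h4 : c = b * y ^ L)
    (ha : a ^ (K + 1) = a) (hb : b ^ (K + 1) = b) (hc : c ^ (K + 1) = c) :
    a ^ K * (b ^ K * a) = a := by
  have powS : ∀ s : M, s ^ K = s ^ L * s := fun s => by rw [hKL, pow_succ]
  have powS' : ∀ s : M, s ^ K = s * s ^ L := fun s => by rw [hKL, pow_succ']
  -- h5 : c = b^K * c
  have h5 : c = b ^ K * c := by
    calc c = b * y ^ L := h4
      _ = b ^ (K + 1) * y ^ L := by rw [hb]
      _ = b ^ K * (b * y ^ L) := by rw [pow_succ, mul_assoc]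
      _ = b ^ K * c := by rw [← h4]
  -- h6 : c^K = b^K * c^K
  have h6 : c ^ K = b ^ K * c ^ K := by
    calc c ^ K = c * c ^ L := powS' c
      _ = b ^ K * c * c ^ L := by rw [← h5]
      _ = b ^ K * (c * c ^ L) := by rw [mul_assoc]
      _ = b ^ K * c ^ K := by rw [← powS' c]
  -- c * c^K = c
  have hcc : c * c ^ K = c := by rw [← pow_succ', hc]
  -- h7 : a^K * c^K = a^K
  have h7 : a ^ K * c ^ K = a ^ K := by
    have haK : a ^ K = (x * c) ^ L * x * c := by
      rw [powS a, hxc, mul_assoc]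
    calc a ^ K * c ^ K = (x * c) ^ L * x * c * c ^ K := by rw [haK]
      _ = (x * c) ^ L * x * (c * c ^ K) := by rw [mul_assoc]
      _ = (x * c) ^ L * x * c := by rw [hcc]
      _ = a ^ K := haK.symm
  -- hbK : b^K = c * (y*c)^L * y
  have hbK : b ^ K = c * (y * c) ^ L * y := by
    calc b ^ K = (c * y) ^ L * (c * y) := by rw [powS b, hcy]
      _ = ((c * y) ^ L * c) * y := by rw [← mul_assoc]
      _ = (c * (y * c) ^ L) * y := by rw [← shiftpow c y L]
  -- h8 : b^K * a = c^K * a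
  have h8 : b ^ K * a = c ^ K * a := by
    calc b ^ K * a = c * (y * c) ^ L * y * (x * c) := by rw [hbK, hxc]
      _ = c * (y * c) ^ L * (y * x) * c := by simp only [mul_assoc]
      _ = c * (y * c) ^ L * (y * c ^ K * x) * c := by rw [h3]
      _ = (c * (y * c) ^ L * y) * (c ^ K * (x * c)) := by simp only [mul_assoc]
      _ = b ^ K * (c ^ K * a) := by rw [← hbK, ← hxc]
      _ = (b ^ K * c ^ K) * a := by rw [mul_assoc]
      _ = c ^ K * a := by rw [← h6]
  calc a ^ K * (b ^ K * a) = a ^ K * (c ^ K * a) := by rw [h8]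
    _ = (a ^ K * c ^ K) * a := by rw [mul_assoc]
    _ = a ^ K * a := by rw [h7]
    _ = a ^ (K + 1) := by rw [← pow_succ]
    _ = a := ha

/-- The key monoid-level computation. -/
private lemma key (x y : M) (m n K : ℕ) (hm : 1 ≤ m) (hn : 1 ≤ n) (hK : 1 ≤ K)
    (hy : y ^ (K + 1) = y)
    (ha : (x * x * y) ^ (K + 1) = x * x * y)
    (hb : (x * y * y) ^ (K + 1) = x * y * y)
    (hc : (x * y) ^ (K + 1) = x * y)
    (hd : (y * x) ^ (K + 1) = y * x)
    (hmid : (x * x * y) ^ m * (x * x * y) ^ m = (x * x * y) ^ m)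
    (hnid : (x * y * y) ^ n * (x * y * y) ^ n = (x * y * y) ^ n) :
    (x * x * y) ^ (2 * m - 1) * (x * y * y) ^ n * (x * x * y) ^ 2 = x * x * y := by
  obtain ⟨L, hKL⟩ : ∃ L, K = L + 1 := ⟨K - 1, by omega⟩
  have hxc : x * x * y = x * (x * y) := by rw [mul_assoc]
  have hcy : x * y * y = (x * y) * y := rfl
  -- h3 : y * (x*y)^K * x = y * x
  have h3 : y * (x * y) ^ K * x = y * x := by
    calc y * (x * y) ^ K * x = y * ((x * y) ^ K * x) := by rw [mul_assoc]
      _ = y * (x * (y * x) ^ K) := by rw [← shiftpow x y K]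
      _ = (y * x) * (y * x) ^ K := by rw [← mul_assoc]
      _ = (y * x) ^ (K + 1) := by rw [← pow_succ']
      _ = y * x := hd
  -- h4 : x*y = (x*y*y) * y^L
  have h4 : x * y = (x * y * y) * y ^ L := by
    calc x * y = x * y ^ (K + 1) := by rw [hy]
      _ = x * (y * (y * y ^ L)) := by
          rw [show K + 1 = 1 + (1 + L) by omega, pow_add, pow_add, pow_one]
      _ = (x * y * y) * y ^ L := by simp only [← mul_assoc]
  have h9 := core x y (x * x * y) (x * y * y) (x * y) K L hKL hxc hcy h3 h4 ha hb hc
  have hE : (x * x * y) ^ m = (x * x * y) ^ K := idem_power_unique _ m K hm hK ha hmid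
  have hF : (x * y * y) ^ n = (x * y * y) ^ K := idem_power_unique _ n K hn hK hb hnid
  have ham : (x * x * y) ^ m * (x * x * y) = x * x * y := by
    rw [hE, ← pow_succ, ha]
  calc (x * x * y) ^ (2 * m - 1) * (x * y * y) ^ n * (x * x * y) ^ 2
      = (x * x * y) ^ (m - 1) * (x * x * y) ^ m * (x * y * y) ^ n
          * ((x * x * y) * (x * x * y)) := by
        rw [← pow_add, show m - 1 + m = 2 * m - 1 by omega, pow_two]
    _ = (x * x * y) ^ (m - 1)
          * ((x * x * y) ^ K * ((x * y * y) ^ K * (x * x * y)) * (x * x * y)) := by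
        rw [hE, hF]; simp only [mul_assoc]
    _ = (x * x * y) ^ (m - 1) * ((x * x * y) * (x * x * y)) := by rw [h9]
    _ = (x * x * y) ^ (m - 1) * (x * x * y) * (x * x * y) := by rw [← mul_assoc]
    _ = (x * x * y) ^ m * (x * x * y) := by
        rw [← pow_succ, show m - 1 + 1 = m by omega]
    _ = x * x * y := ham

end MonoidLemmas

private lemma spow_coe {S : Type*} [Semigroup S] (s : S) :
    ∀ n : ℕ, 1 ≤ n → ((spow s n : S) : WithOne S) = (s : WithOne S) ^ n := by
  intro n hn
  induction n with
  | zero => omega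
  | succ k ih =>
    match k, ih with
    | 0, _ => simp [spow]
    | k + 1, ih =>
      have h := ih (by omega)
      rw [show spow s (k + 2) = spow s (k + 1) * s from rfl, WithOne.coe_mul, h, ← pow_succ]

/-- in a finite completely regular semigroup `S` (every element `s`
satisfies `s^(k+1) = s` for some `k ≥ 1`), for all `p, q ∈ S` and all `m, n ≥ 1`
such that `(p²q)ᵐ` and `(pq²)ⁿ` are idempotent, one has
`(p²·q)^(2m−1) · (p·q²)ⁿ · (p²·q)² = p²·q`. -/
theorem cr_pseudoidentity_elementwise {S : Type*} [Semigroup S] [Fintype S]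
    (hcr : ∀ s : S, ∃ k : ℕ, 1 ≤ k ∧ spow s (k + 1) = s)
    (p q : S) (m n : ℕ) (hm : 1 ≤ m) (hn : 1 ≤ n)
    (hmid : spow (p * p * q) m * spow (p * p * q) m = spow (p * p * q) m)
    (hnid : spow (p * q * q) n * spow (p * q * q) n = spow (p * q * q) n) :
    spow (p * p * q) (2 * m - 1) * spow (p * q * q) n * spow (p * p * q) 2
      = p * p * q := by
  -- lift the complete-regularity hypothesis to `WithOne S`
  have hcr' : ∀ s : S, ∃ k : ℕ, 1 ≤ k ∧ ((s : WithOne S)) ^ (k + 1) = (s : WithOne S) := by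
    intro s
    obtain ⟨k, hk1, hk⟩ := hcr s
    exact ⟨k, hk1, by rw [← spow_coe s (k + 1) (by omega), hk]⟩
  set x : WithOne S := (p : WithOne S) with hx
  set y : WithOne S := (q : WithOne S) with hy0
  obtain ⟨k1, hk11, hk1⟩ := hcr' q
  obtain ⟨k2, hk21, hk2⟩ := hcr' (p * p * q)
  obtain ⟨k3, hk31, hk3⟩ := hcr' (p * q * q)
  obtain ⟨k4, hk41, hk4⟩ := hcr' (p * q)
  obtain ⟨k5, hk51, hk5⟩ := hcr' (q * p)
  set K : ℕ := k1 * k2 * k3 * k4 * k5 with hKdef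
  have hK1 : 1 ≤ K := by
    have := Nat.mul_le_mul (Nat.mul_le_mul (Nat.mul_le_mul (Nat.mul_le_mul hk11 hk21) hk31) hk41) hk51
    simpa using this
  have cpp : ((p * p * q : S) : WithOne S) = x * x * y := by
    rw [WithOne.coe_mul, WithOne.coe_mul]
  have cpq : ((p * q * q : S) : WithOne S) = x * y * y := by
    rw [WithOne.coe_mul, WithOne.coe_mul]
  have cxy : ((p * q : S) : WithOne S) = x * y := WithOne.coe_mul p q
  have cyx : ((q * p : S) : WithOne S) = y * x := WithOne.coe_mul q p
  have hy' : y ^ (K + 1) = y :=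
    lift_period _ k1 K hk1 ⟨k2 * k3 * k4 * k5, by ring⟩
  have ha' : (x * x * y) ^ (K + 1) = x * x * y := by
    rw [← cpp]; exact lift_period _ k2 K hk2 ⟨k1 * k3 * k4 * k5, by ring⟩
  have hb' : (x * y * y) ^ (K + 1) = x * y * y := by
    rw [← cpq]; exact lift_period _ k3 K hk3 ⟨k1 * k2 * k4 * k5, by ring⟩
  have hc' : (x * y) ^ (K + 1) = x * y := by
    rw [← cxy]; exact lift_period _ k4 K hk4 ⟨k1 * k2 * k3 * k5, by ring⟩
  have hd' : (y * x) ^ (K + 1) = y * x := by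
    rw [← cyx]; exact lift_period _ k5 K hk5 ⟨k1 * k2 * k3 * k4, by ring⟩
  have hmid' : (x * x * y) ^ m * (x * x * y) ^ m = (x * x * y) ^ m := by
    rw [← cpp, ← spow_coe _ m hm, ← WithOne.coe_mul, hmid]
  have hnid' : (x * y * y) ^ n * (x * y * y) ^ n = (x * y * y) ^ n := by
    rw [← cpq, ← spow_coe _ n hn, ← WithOne.coe_mul, hnid]
  have main := key x y m n K hm hn hK1 hy' ha' hb' hc' hd' hmid' hnid'
  have lift_goal :
      ((spow (p * p * q) (2 * m - 1) * spow (p * q * q) n * spow (p * p * q) 2 : S) : WithOne S)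
        = ((p * p * q : S) : WithOne S) := by
    rw [WithOne.coe_mul, WithOne.coe_mul,
      spow_coe _ (2 * m - 1) (by omega), spow_coe _ n hn, spow_coe _ 2 (by omega),
      cpp, cpq]
    exact main
  exact_mod_cast lift_goal
end
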